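/- Let L ⊂ ℂ be a lattice, v primitive, and v' a minimal-norm positive completion. Write ρ(v) = ε·|v'|/|v| where ε = +1 if Re(v'/v) > 0 and ε = −1 otherwise, and sk(v,v') = Re(v'/v). Then ρ(v) = sk(v,v')·(1 + O(1/|v|²)), with implied constant depending only on L. -/

import Mathlib

noncomputable section

open Complex

/-- `{v, v'}` is a positively oriented ℤ-basis of the lattice `L ⊆ ℂ`. -/
def IsOrientedBasis (L : AddSubgroup ℂ) (v v' : ℂ) : Prop :=
  0 < (v' / v).im ∧ AddSubgroup.closure {v, v'} = L

/-- `v` is a primitive vector of `L`: it can be completed to a basis of `L`. -/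
def IsPrimitive (L : AddSubgroup ℂ) (v : ℂ) : Prop :=
  ∃ v', IsOrientedBasis L v v'

/-- `v'` has minimal norm among completions of `v` to a positively oriented basis of `L`. -/
def IsMinCompletion (L : AddSubgroup ℂ) (v v' : ℂ) : Prop :=
  IsOrientedBasis L v v' ∧ ∀ w, IsOrientedBasis L v w → ‖v'‖ ≤ ‖w‖

/-- The (signed) area of the parallelogram spanned by `v, v'`; it is positive
when `{v, v'}` is positively oriented, and equals `|v||v'| sin α`. -/
def pArea (v v' : ℂ) : ℝ := ((starRingEnd ℂ) v * v').im


lemma pArea_combo (a b c d : ℝ) (v v' : ℂ) :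
    pArea ((a:ℂ)*v + (b:ℂ)*v') ((c:ℂ)*v + (d:ℂ)*v')
      = (a*d - b*c) * pArea v v' := by
  simp only [pArea, map_add, map_mul, Complex.conj_ofReal]
  simp only [Complex.add_im, Complex.add_re, Complex.mul_im, Complex.mul_re,
    Complex.conj_re, Complex.conj_im, Complex.ofReal_re, Complex.ofReal_im]
  ring

lemma pArea_eq (v v' : ℂ) (hv : v ≠ 0) :
    pArea v v' = Complex.normSq v * (v'/v).im := by
  have : (starRingEnd ℂ) v * v' = (Complex.normSq v : ℂ) * (v'/v) := by
    field_simp [Complex.normSq_eq_conj_mul_self]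
    rw [Complex.normSq_eq_conj_mul_self]; ring
  rw [pArea, this]
  simp [Complex.mul_im]

lemma abs_pArea_le (v v' : ℂ) : |pArea v v'| ≤ ‖v‖ * ‖v'‖ := by
  calc |pArea v v'| ≤ ‖(starRingEnd ℂ) v * v'‖ := Complex.abs_im_le_norm _
    _ = ‖v‖ * ‖v'‖ := by simp

lemma ne_zero_of_oriented {L : AddSubgroup ℂ} {v v' : ℂ} (h : IsOrientedBasis L v v') :
    v ≠ 0 ∧ v' ≠ 0 := by
  have him := h.1
  constructor
  · rintro rfl
    rw [div_zero] at him
    exact absurd him (by simp)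
  · rintro rfl
    rw [zero_div] at him
    exact absurd him (by simp)

lemma pArea_pos {L : AddSubgroup ℂ} {v v' : ℂ} (h : IsOrientedBasis L v v') :
    0 < pArea v v' := by
  obtain ⟨hv, -⟩ := ne_zero_of_oriented h
  rw [pArea_eq v v' hv]
  exact mul_pos (Complex.normSq_pos.mpr hv) h.1

/-- Change of basis: the area of any oriented basis is at most that of any other. -/
lemma pArea_le_pArea {L : AddSubgroup ℂ} {v v' w w' : ℂ}
    (h1 : IsOrientedBasis L v v') (h2 : IsOrientedBasis L w w') :
    pArea v v' ≤ pArea w w' := by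
  have hw : w ∈ AddSubgroup.closure ({v, v'} : Set ℂ) := by
    rw [h1.2, ← h2.2]
    exact AddSubgroup.subset_closure (by simp)
  have hw' : w' ∈ AddSubgroup.closure ({v, v'} : Set ℂ) := by
    rw [h1.2, ← h2.2]
    exact AddSubgroup.subset_closure (by simp)
  rw [AddSubgroup.mem_closure_pair] at hw hw'
  obtain ⟨a, b, hab⟩ := hw
  obtain ⟨c, d, hcd⟩ := hw'
  have key : pArea w w' = ((a*d - b*c : ℤ) : ℝ) * pArea v v' := by
    rw [← hab, ← hcd]
    have := pArea_combo (a:ℝ) (b:ℝ) (c:ℝ) (d:ℝ) v v'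
    push_cast at this ⊢
    simpa [zsmul_eq_mul] using this
  have hA : 0 < pArea v v' := pArea_pos h1
  have hA' : 0 < pArea w w' := pArea_pos h2
  have hdet : 0 < ((a*d - b*c : ℤ) : ℝ) := by
    by_contra hcon
    push_neg at hcon
    nlinarith
  have hdet1 : (1:ℝ) ≤ ((a*d - b*c : ℤ) : ℝ) := by
    have : (0:ℤ) < a*d - b*c := by exact_mod_cast hdet
    exact_mod_cast this
  nlinarith

/-- Lower bound for nonzero lattice vectors. -/
lemma mu_le {L : AddSubgroup ℂ} {w w' : ℂ} (hL : IsOrientedBasis L w w')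
    {z : ℂ} (hz : z ∈ L) (hz0 : z ≠ 0) :
    pArea w w' / max (‖w‖) (‖w'‖) ≤ ‖z‖ := by
  obtain ⟨hw0, hw'0⟩ := ne_zero_of_oriented hL
  have hA : 0 < pArea w w' := pArea_pos hL
  have hM : 0 < max (‖w‖) (‖w'‖) := by
    simp only [lt_max_iff]
    left; exact norm_pos_iff.mpr hw0
  rw [div_le_iff₀ hM]
  rw [← hL.2, AddSubgroup.mem_closure_pair] at hz
  obtain ⟨a, b, hab⟩ := hz
  have hab' : z = (a:ℂ) * w + (b:ℂ) * w' := by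
    rw [← hab]; push_cast [zsmul_eq_mul]; ring
  have h1 : pArea w z = (b:ℝ) * pArea w w' := by
    have := pArea_combo 1 0 (a:ℝ) (b:ℝ) w w'
    rw [hab']
    push_cast at this ⊢
    simpa using this
  have h2 : pArea z w' = (a:ℝ) * pArea w w' := by
    have := pArea_combo (a:ℝ) (b:ℝ) 0 1 w w'
    rw [hab']
    push_cast at this ⊢
    simpa using this
  rcases eq_or_ne b 0 with hb | hb
  · have ha : a ≠ 0 := by
      rintro rfl
      simp [hb] at hab'
      exact hz0 hab'
    have ha1 : (1:ℝ) ≤ |(a:ℝ)| := by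
      rw [← Int.cast_abs]
      exact_mod_cast Int.one_le_abs (by exact_mod_cast ha)
    have := abs_pArea_le z w'
    rw [h2, abs_mul, abs_of_pos hA] at this
    have hle : ‖w'‖ ≤ max (‖w‖) (‖w'‖) := le_max_right _ _
    nlinarith [norm_nonneg z]
  · have hb1 : (1:ℝ) ≤ |(b:ℝ)| := by
      rw [← Int.cast_abs]
      exact_mod_cast Int.one_le_abs (by exact_mod_cast hb)
    have := abs_pArea_le w z
    rw [h1, abs_mul, abs_of_pos hA] at this
    have hle : ‖w‖ ≤ max (‖w‖) (‖w'‖) := le_max_left _ _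
    nlinarith [norm_nonneg z]


set_option maxHeartbeats 1000000 in
/-- for a minimal positive completion `v'` of `v`, the signed
ratio `ρ(v) = ±|v'|/|v|` (sign `+` iff `Re(v'/v) > 0`) satisfies
`ρ(v) = sk(v,v')·(1 + O(1/|v|²))` with `sk(v,v') = Re(v'/v)`, the implied
constant depending only on `L` (asymptotically as `|v| → ∞`). -/
theorem rho_eq_sk_asymptotic (L : AddSubgroup ℂ) (w w' : ℂ)
    (hL : IsOrientedBasis L w w') :
    ∃ C > (0 : ℝ), ∃ V₀ : ℝ, ∀ v v' : ℂ, IsMinCompletion L v v' → V₀ ≤ ‖v‖ →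
      |(if 0 < (v' / v).re then (1 : ℝ) else -1) * ‖v'‖ / ‖v‖
          - (v' / v).re| ≤ C * |(v' / v).re| / (‖v‖) ^ 2 := by
  set A₀ : ℝ := pArea w w' with hA₀def
  have hA₀ : 0 < A₀ := pArea_pos hL
  set M : ℝ := max (‖w‖) (‖w'‖) with hMdef
  have hM : 0 < M := by
    simp only [hMdef, lt_max_iff]
    exact Or.inl (norm_pos_iff.mpr (ne_zero_of_oriented hL).1)
  set μ : ℝ := A₀ / M with hμdef
  have hμ : 0 < μ := div_pos hA₀ hM
  clear_value A₀ M μ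
  refine ⟨4 * A₀^2 / μ^2, by positivity, 2 * A₀ / μ, ?_⟩
  intro v v' hmin hV₀
  obtain ⟨hori, -⟩ := hmin
  obtain ⟨hv0, hv'0⟩ := ne_zero_of_oriented hori
  set e : ℝ := (v' / v).re with hedef
  set m : ℝ := (v' / v).im with hmdef
  have hm : 0 < m := hori.1
  set V : ℝ := ‖v‖ with hVdef
  have hV : 0 < V := norm_pos_iff.mpr hv0
  have hV₀pos : 0 < 2 * A₀ / μ := by positivity
  have hVbig : 2 * A₀ / μ ≤ V := hV₀
  set R : ℝ := ‖v'‖ / ‖v‖ with hRdef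
  have hRabs : R = ‖v' / v‖ := (norm_div v' v).symm
  have hR2 : R ^ 2 = e ^ 2 + m ^ 2 := by
    rw [hRabs, Complex.sq_norm, Complex.normSq_apply]
    ring
  have hR0 : 0 ≤ R := by rw [hRabs]; exact norm_nonneg _
  -- area bound : m * V^2 ≤ A₀
  have hmV : m * V ^ 2 ≤ A₀ := by
    have h1 : pArea v v' ≤ A₀ := by rw [hA₀def]; exact pArea_le_pArea hori hL
    rw [pArea_eq v v' hv0, Complex.normSq_eq_norm_sq] at h1
    calc m * V ^ 2 = ‖v‖ ^ 2 * m := by rw [hVdef]; ring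
      _ ≤ A₀ := h1
  -- minimal norm bound : μ ≤ |v'|
  have hμv' : μ ≤ ‖v'‖ := by
    rw [hμdef, hA₀def, hMdef]
    refine mu_le hL ?_ hv'0
    rw [← hori.2]
    exact AddSubgroup.subset_closure (by simp)
  have hμR : μ ≤ R * V := by
    rw [hRdef, ← hVdef, div_mul_cancel₀ _ hV.ne']
    exact hμv'
  -- rewrite the goal purely in terms of e, m, V, R
  have hv'RV : ‖v'‖ = R * V := by
    rw [hRdef, ← hVdef, div_mul_cancel₀ _ hV.ne']
  rw [hv'RV]
  clear_value e m V R
  clear hRabs hv'RV hμv' hedef hmdef hVdef hRdef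
  -- m * V is small
  have hmVsmall : m * V ≤ μ / 2 := by
    have h1 : m * V * V ≤ A₀ := by nlinarith
    have h2 : m * V ≤ A₀ / V := by rw [le_div_iff₀ hV]; exact h1
    have h3 : A₀ / V ≤ A₀ / (2 * A₀ / μ) :=
      div_le_div_of_nonneg_left hA₀.le hV₀pos hVbig
    have h4 : A₀ / (2 * A₀ / μ) = μ / 2 := by field_simp
    linarith
  -- hence |e| * V is big
  have heV : μ / 2 ≤ |e| * V := by
    have hsum : (R * V)^2 = (e * V)^2 + (m * V)^2 := by nlinarith
    have hmm : (m * V)^2 ≤ (μ/2)^2 := by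
      have := mul_self_le_mul_self (by positivity : (0:ℝ) ≤ m * V) hmVsmall
      nlinarith
    have hRV0 : 0 ≤ R * V := mul_nonneg hR0 hV.le
    have hmu2 : μ^2 ≤ (R * V)^2 := by
      nlinarith [mul_nonneg (sub_nonneg.mpr hμR) (by linarith : (0:ℝ) ≤ R * V + μ)]
    have he2 : (|e| * V)^2 = (e * V)^2 := by rw [mul_pow, mul_pow, _root_.sq_abs]
    have hq : μ^2 = 4 * (μ/2)^2 := by ring
    have h1 : (μ/2)^2 ≤ (|e| * V)^2 := by rw [he2]; linarith [sq_nonneg (μ/2)]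
    have h2 : 0 ≤ |e| * V := mul_nonneg (abs_nonneg e) hV.le
    nlinarith [sq_nonneg (|e| * V - μ/2)]
  have he0 : e ≠ 0 := by
    intro h
    rw [h, abs_zero, zero_mul] at heV
    nlinarith
  have hfR : |e| ≤ R := by
    have h1 : |e|^2 ≤ R^2 := by rw [_root_.sq_abs]; nlinarith
    nlinarith [abs_nonneg e]
  -- the main estimate
  have main : R - |e| ≤ 4 * A₀^2 / μ^2 * |e| / V^2 := by
    rw [le_div_iff₀ (pow_pos hV 2)]
    have key1 : (R - |e|) * |e| ≤ m^2 := by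
      have h1 : (R - |e|) * (R + |e|) = m^2 := by
        have h2 : R^2 - |e|^2 = m^2 := by rw [_root_.sq_abs]; nlinarith
        nlinarith
      nlinarith [abs_nonneg e]
    have key2 : m^2 * V^4 ≤ A₀^2 := by
      have := mul_self_le_mul_self (by positivity : (0:ℝ) ≤ m * V^2) hmV
      nlinarith
    have key3 : A₀^2 ≤ 4 * A₀^2 / μ^2 * |e|^2 * V^2 := by
      have h1 : (μ/2)^2 ≤ (|e| * V)^2 := by
        nlinarith [abs_nonneg e, heV, hμ]
      have h2 : 4 * A₀^2 / μ^2 * (μ/2)^2 = A₀^2 := by field_simp; ring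
      have h3 : 0 ≤ 4 * A₀^2 / μ^2 := by positivity
      nlinarith
    have habs0 : 0 < |e| := abs_pos.mpr he0
    nlinarith [mul_le_mul_of_nonneg_right key1 (by positivity : (0:ℝ) ≤ V^4),
      mul_pos habs0 (pow_pos hV 2)]
  -- conclude, by cases on the sign of e
  have hCnonneg : 0 ≤ 4 * A₀^2 / μ^2 * |e| / V^2 := by
    have h1 : 0 ≤ 4 * A₀^2 / μ^2 * |e| := by positivity
    exact div_nonneg h1 (sq_nonneg V)
  rcases lt_trichotomy e 0 with he | he | he
  · rw [if_neg (by linarith)]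
    have habse : |e| = -e := abs_of_neg he
    have hexp : (-1 : ℝ) * (R * V) / V - e = -(R - |e|) := by
      rw [habse]
      field_simp
      try ring
    rw [hexp, abs_neg, _root_.abs_of_nonneg (by linarith)]
    exact main
  · exact absurd he he0
  · rw [if_pos he]
    have habse : |e| = e := abs_of_pos he
    have hexp : (1 : ℝ) * (R * V) / V - e = R - |e| := by
      rw [habse]
      field_simp
      try ring
    rw [hexp, _root_.abs_of_nonneg (by linarith)]
    exact main
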